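/- Let Φ be an irreducible reduced crystallographic simply-laced root system with base Δ and highest root θ; let α ∈ Δ be an extreme Heisenberg root with neighbour β, and set δ := θ − α − β. Then for every ε ∈ Ψ_α with ε ≠ δ one has ⟨ε,β⟩ ∈ {0,1}; equivalently, writing Z := β^∨ + S_α/2 (so that ε(Z) = ⟨ε,β⟩ + c_α(ε)), one has ε(Z) ∈ {1,2}. -/
import Mathlib


open scoped InnerProductSpace

namespace PaperRS

variable {E : Type*} [NormedAddCommGroup E] [InnerProductSpace ℝ E]

/-- A reduced crystallographic simply-laced root system, normalized so that every root has
squared length `2` (hence `⟪δ, ε⟫` is the Cartan integer `⟨δ, ε^∨⟩`). -/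
structure IsRootSystem (Φ : Set E) : Prop where
  finite : Φ.Finite
  nonzero : (0 : E) ∉ Φ
  span_top : Submodule.span ℝ Φ = ⊤
  norm_two : ∀ α ∈ Φ, ⟪α, α⟫_ℝ = 2
  reduced : ∀ α ∈ Φ, ∀ t : ℝ, t • α ∈ Φ → t = 1 ∨ t = -1
  cartan_int : ∀ α ∈ Φ, ∀ β ∈ Φ, ∃ n : ℤ, ⟪α, β⟫_ℝ = (n : ℝ)
  reflect_mem : ∀ α ∈ Φ, ∀ β ∈ Φ, β - ⟪β, α⟫_ℝ • α ∈ Φ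

/-- Irreducibility: `Φ` is nonempty and cannot be split into two mutually orthogonal parts. -/
def IsIrreducible (Φ : Set E) : Prop :=
  Φ.Nonempty ∧ ∀ Φ₁ Φ₂ : Set E, Φ = Φ₁ ∪ Φ₂ →
    (∀ a ∈ Φ₁, ∀ b ∈ Φ₂, ⟪a, b⟫_ℝ = 0) → Φ₁ = ∅ ∨ Φ₂ = ∅

/-- The reflection in (the hyperplane orthogonal to) a root `α` of squared length `2`. -/
def sRefl (α : E) : Function.End E := fun x => x - ⟪x, α⟫_ℝ • α

/-- The group generated by the reflections in the elements of `S`; since every reflection is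
an involution, the submonoid generated by the reflections coincides with the generated group. -/
def genBy (S : Set E) : Submonoid (Function.End E) :=
  Submonoid.closure (sRefl '' S)

/-- The Weyl group of `Φ`: the group generated by the reflections in all the roots. -/
abbrev WeylGroup (Φ : Set E) : Submonoid (Function.End E) := genBy Φ

/-- A base (set of simple roots) of `Φ`, together with the (unique) integer coefficients
`coeff δ γ` of each root `δ` with respect to the simple roots. -/
structure Base (Φ : Set E) where
  Δ : Finset E
  coeff : E → E → ℤ
  subset : ↑Δ ⊆ Φ
  indep : LinearIndependent ℝ (fun γ : {x : E // x ∈ Δ} => (γ : E))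
  expand : ∀ δ ∈ Φ, δ = ∑ γ ∈ Δ, (coeff δ γ : ℝ) • γ
  sign : ∀ δ ∈ Φ, (∀ γ ∈ Δ, 0 ≤ coeff δ γ) ∨ (∀ γ ∈ Δ, coeff δ γ ≤ 0)

variable {Φ : Set E}

/-- `θ` is the highest root of `Φ` with respect to the base `B`. -/
def IsHighest (B : Base Φ) (θ : E) : Prop :=
  θ ∈ Φ ∧ ∀ δ ∈ Φ, ∀ γ ∈ B.Δ, B.coeff δ γ ≤ B.coeff θ γ

/-- `α` is a Heisenberg simple root: the highest root `θ` has `α`-coefficient `2`, and every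
root other than `±θ` has `α`-coefficient in `{-1, 0, 1}`. -/
def IsHeisenberg (B : Base Φ) (θ α : E) : Prop :=
  B.coeff θ α = 2 ∧
    ∀ δ ∈ Φ, δ ≠ θ → δ ≠ -θ →
      B.coeff δ α = -1 ∨ B.coeff δ α = 0 ∨ B.coeff δ α = 1

/-- `α` is an extreme simple root with (unique) neighbour `β`. -/
def IsExtreme (B : Base Φ) (α β : E) : Prop :=
  β ∈ B.Δ ∧ β ≠ α ∧ ⟪α, β⟫_ℝ ≠ 0 ∧
    ∀ γ ∈ B.Δ, γ ≠ α → ⟪α, γ⟫_ℝ ≠ 0 → γ = β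

/-- `Φ_α`: the roots with `α`-coefficient `1` that are orthogonal to `α`. -/
def PhiSet (B : Base Φ) (α : E) : Set E :=
  {ε ∈ Φ | B.coeff ε α = 1 ∧ ⟪ε, α⟫_ℝ = 0}

/-- `Ψ_α`: the roots `ε` with `α`-coefficient `1` and `⟪ε, α⟫ ≤ 0`. -/
def PsiSet (B : Base Φ) (α : E) : Set E :=
  {ε ∈ Φ | B.coeff ε α = 1 ∧ ⟪ε, α⟫_ℝ ≤ 0}


section Aux

lemma neg_mem (hΦ : IsRootSystem Φ) {δ : E} (hδ : δ ∈ Φ) : -δ ∈ Φ := by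
  have h := hΦ.reflect_mem δ hδ δ hδ
  rw [hΦ.norm_two δ hδ] at h
  have e : δ - (2:ℝ) • δ = -δ := by rw [two_smul]; abel
  rwa [e] at h

lemma pairing_cases (hΦ : IsRootSystem Φ) {δ ε : E} (hδ : δ ∈ Φ) (hε : ε ∈ Φ)
    (h1 : δ ≠ ε) (h2 : δ ≠ -ε) :
    ⟪δ, ε⟫_ℝ = -1 ∨ ⟪δ, ε⟫_ℝ = 0 ∨ ⟪δ, ε⟫_ℝ = 1 := by
  obtain ⟨n, hn⟩ := hΦ.cartan_int δ hδ ε hε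
  have hsub : (0:ℝ) < ⟪δ - ε, δ - ε⟫_ℝ :=
    lt_of_le_of_ne real_inner_self_nonneg
      (fun h => (sub_ne_zero.mpr h1) (inner_self_eq_zero.mp h.symm))
  have hadd : (0:ℝ) < ⟪δ + ε, δ + ε⟫_ℝ :=
    lt_of_le_of_ne real_inner_self_nonneg
      (fun h => h2 (eq_neg_of_add_eq_zero_left (inner_self_eq_zero.mp h.symm)))
  rw [real_inner_sub_sub_self, hΦ.norm_two δ hδ, hΦ.norm_two ε hε, hn] at hsub
  rw [real_inner_add_add_self, hΦ.norm_two δ hδ, hΦ.norm_two ε hε, hn] at hadd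
  have hlt : (n:ℝ) < 2 := by linarith
  have hgt : (-2:ℝ) < (n:ℝ) := by linarith
  have hlt' : n < 2 := by exact_mod_cast hlt
  have hgt' : (-2:ℤ) < n := by exact_mod_cast hgt
  have : n = -1 ∨ n = 0 ∨ n = 1 := by omega
  rcases this with h|h|h <;> rw [hn, h] <;> norm_num

lemma Base.unique (B : Base Φ) {c d : E → ℝ}
    (h : ∑ γ ∈ B.Δ, c γ • γ = ∑ γ ∈ B.Δ, d γ • γ) : ∀ γ ∈ B.Δ, c γ = d γ := by
  intro γ hγ
  have h0 : ∑ i : {x : E // x ∈ B.Δ}, (c i.val - d i.val) • i.val = 0 := by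
    rw [Finset.univ_eq_attach]
    rw [Finset.sum_attach B.Δ (fun x => (c x - d x) • x)]
    simp only [sub_smul, Finset.sum_sub_distrib, h, sub_self]
  have h2 := Fintype.linearIndependent_iff.mp B.indep _ h0 ⟨γ, hγ⟩
  simp only at h2
  linarith

lemma Base.coeff_eq (B : Base Φ) {δ : E} (hδ : δ ∈ Φ) {c : E → ℝ}
    (h : δ = ∑ γ ∈ B.Δ, c γ • γ) : ∀ γ ∈ B.Δ, (B.coeff δ γ : ℝ) = c γ :=
  B.unique (by rw [← B.expand δ hδ, ← h])

lemma Base.coeff_simple [DecidableEq E] (B : Base Φ) {β' γ : E} (hβ' : β' ∈ B.Δ)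
    (hγ : γ ∈ B.Δ) : (B.coeff β' γ : ℝ) = if γ = β' then 1 else 0 := by
  refine B.coeff_eq (c := fun γ => if γ = β' then 1 else 0) (B.subset hβ') ?_ γ hγ
  rw [show ∑ γ ∈ B.Δ, (if γ = β' then (1:ℝ) else 0) • γ
      = ∑ γ ∈ B.Δ, (if γ = β' then γ else 0) from by
    refine Finset.sum_congr rfl fun x _ => ?_; split <;> simp]
  rw [Finset.sum_ite_eq' B.Δ β' (fun x => x)]
  simp [hβ']

lemma Base.coeff_self (B : Base Φ) {β' : E} (hβ' : β' ∈ B.Δ) : (B.coeff β' β' : ℝ) = 1 := by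
  classical
  rw [B.coeff_simple hβ' hβ']; simp

lemma Base.coeff_other (B : Base Φ) {β' γ : E} (hβ' : β' ∈ B.Δ) (hγ : γ ∈ B.Δ)
    (hne : γ ≠ β') : (B.coeff β' γ : ℝ) = 0 := by
  classical
  rw [B.coeff_simple hβ' hγ]; simp [hne]

lemma Base.coeff_neg (B : Base Φ) {δ : E} (hδ : δ ∈ Φ) (hδ' : -δ ∈ Φ) {γ : E} (hγ : γ ∈ B.Δ) :
    (B.coeff (-δ) γ : ℝ) = -(B.coeff δ γ : ℝ) := by
  refine B.coeff_eq (c := fun γ => -(B.coeff δ γ : ℝ)) hδ' ?_ γ hγ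
  rw [show -δ = -(∑ γ ∈ B.Δ, (B.coeff δ γ : ℝ) • γ) from by rw [← B.expand δ hδ]]
  simp [neg_smul, Finset.sum_neg_distrib]

lemma Base.coeff_add (B : Base Φ) {δ ε : E} (hδ : δ ∈ Φ) (hε : ε ∈ Φ) (hs : δ + ε ∈ Φ)
    {γ : E} (hγ : γ ∈ B.Δ) :
    (B.coeff (δ + ε) γ : ℝ) = (B.coeff δ γ : ℝ) + (B.coeff ε γ : ℝ) := by
  refine B.coeff_eq (c := fun γ => (B.coeff δ γ : ℝ) + (B.coeff ε γ : ℝ)) hs ?_ γ hγ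
  rw [show δ + ε = (∑ γ ∈ B.Δ, (B.coeff δ γ : ℝ) • γ) + ∑ γ ∈ B.Δ, (B.coeff ε γ : ℝ) • γ from by
    rw [← B.expand δ hδ, ← B.expand ε hε]]
  simp [add_smul, Finset.sum_add_distrib]

lemma Base.coeff_sub (B : Base Φ) {δ ε : E} (hδ : δ ∈ Φ) (hε : ε ∈ Φ) (hs : δ - ε ∈ Φ)
    {γ : E} (hγ : γ ∈ B.Δ) :
    (B.coeff (δ - ε) γ : ℝ) = (B.coeff δ γ : ℝ) - (B.coeff ε γ : ℝ) := by
  refine B.coeff_eq (c := fun γ => (B.coeff δ γ : ℝ) - (B.coeff ε γ : ℝ)) hs ?_ γ hγ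
  rw [show δ - ε = (∑ γ ∈ B.Δ, (B.coeff δ γ : ℝ) • γ) - ∑ γ ∈ B.Δ, (B.coeff ε γ : ℝ) • γ from by
    rw [← B.expand δ hδ, ← B.expand ε hε]]
  simp [sub_smul, Finset.sum_sub_distrib]

end Aux

/-- For an extreme Heisenberg root `α` with neighbour `β` and `δ := θ - α - β`:
every `ε ∈ Ψ_α` with `ε ≠ δ` has `⟪ε, β⟫ ∈ {0, 1}`; equivalently, writing
`ε(Z) = ⟪ε, β⟫ + c_α(ε)` for `Z = β^∨ + S_α/2`, one has `ε(Z) ∈ {1, 2}`. -/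
theorem pairing_with_beta_of_mem_psiSet
    (hΦ : IsRootSystem Φ) (hirr : IsIrreducible Φ) (B : Base Φ)
    {θ α β : E} (hθ : IsHighest B θ) (hα : α ∈ B.Δ)
    (hext : IsExtreme B α β) (hH : IsHeisenberg B θ α)
    {ε : E} (hε : ε ∈ PsiSet B α) (hne : ε ≠ θ - α - β) :
    (⟪ε, β⟫_ℝ = 0 ∨ ⟪ε, β⟫_ℝ = 1) ∧
      (⟪ε, β⟫_ℝ + (B.coeff ε α : ℝ) = 1 ∨ ⟪ε, β⟫_ℝ + (B.coeff ε α : ℝ) = 2) := by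
  obtain ⟨hεΦ, hcε, hεα⟩ := hε
  obtain ⟨hβΔ, hβα, hαβ0, -⟩ := hext
  have hαΦ : α ∈ Φ := B.subset hα
  have hβΦ : β ∈ Φ := B.subset hβΔ
  have hαβne : α ≠ β := Ne.symm hβα
  have hcβα : (B.coeff β α : ℝ) = 0 := B.coeff_other hβΔ hα hαβne
  -- β ≠ -α (hence α ≠ -β)
  have hβnegα : β ≠ -α := by
    intro h
    have h2 : (B.coeff (-α) β : ℝ) = -(B.coeff α β : ℝ) :=
      B.coeff_neg hαΦ (h ▸ hβΦ) hβΔ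
    have h3 : (B.coeff α β : ℝ) = 0 := B.coeff_other hα hβΔ hβα
    have h1 : (B.coeff (-α) β : ℝ) = 1 := by rw [← h]; exact B.coeff_self hβΔ
    rw [h2, h3] at h1; norm_num at h1
  have hαnegβ : α ≠ -β := fun h => hβnegα (by rw [h]; abel)
  -- ⟪α, β⟫ = -1
  have hαβ : ⟪α, β⟫_ℝ = -1 := by
    rcases pairing_cases hΦ hαΦ hβΦ hαβne hαnegβ with h | h | h
    · exact h
    · exact absurd h hαβ0
    · exfalso
      have hmem : β - α ∈ Φ := by
        have h' := hΦ.reflect_mem α hαΦ β hβΦ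
        rwa [real_inner_comm α β, h, one_smul] at h'
      have hc1 : (B.coeff (β - α) β : ℝ) = 1 := by
        rw [B.coeff_sub hβΦ hαΦ hmem hβΔ, B.coeff_self hβΔ,
          B.coeff_other hα hβΔ hβα]; ring
      have hc2 : (B.coeff (β - α) α : ℝ) = -1 := by
        rw [B.coeff_sub hβΦ hαΦ hmem hα, B.coeff_self hα, hcβα]; ring
      have hc1' : B.coeff (β - α) β = 1 := by exact_mod_cast hc1
      have hc2' : B.coeff (β - α) α = -1 := by exact_mod_cast hc2
      rcases B.sign (β - α) hmem with hs | hs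
      · have := hs α hα; omega
      · have := hs β hβΔ; omega
  -- ε ≠ ±β
  have hεβ : ε ≠ β := by
    intro h
    have : (B.coeff ε α : ℝ) = 0 := by rw [h]; exact hcβα
    rw [hcε] at this; norm_num at this
  have hεnegβ : ε ≠ -β := by
    intro h
    have h2 : (B.coeff (-β) α : ℝ) = -(B.coeff β α : ℝ) :=
      B.coeff_neg hβΦ (h ▸ hεΦ) hα
    have : (B.coeff ε α : ℝ) = 0 := by rw [h, h2, hcβα]; ring
    rw [hcε] at this; norm_num at this
  -- rule out ⟪ε, β⟫ = -1
  have key : ⟪ε, β⟫_ℝ = 0 ∨ ⟪ε, β⟫_ℝ = 1 := by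
    rcases pairing_cases hΦ hεΦ hβΦ hεβ hεnegβ with h | h | h
    · exfalso
      have hηΦ : ε + β ∈ Φ := by
        have h' := hΦ.reflect_mem β hβΦ ε hεΦ
        rw [h] at h'
        have e : ε - (-1:ℝ) • β = ε + β := by rw [neg_one_smul]; abel
        rwa [e] at h'
      have hcη : (B.coeff (ε + β) α : ℝ) = 1 := by
        rw [B.coeff_add hεΦ hβΦ hηΦ hα, hcβα, hcε]; norm_num
      have hηα : ⟪ε + β, α⟫_ℝ ≤ -1 := by
        rw [inner_add_left, real_inner_comm α β, hαβ]; linarith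
      have hηa : ε + β ≠ α := by
        intro hh; rw [hh, hΦ.norm_two α hαΦ] at hηα; linarith
      have hηna : ε + β ≠ -α := by
        intro hh
        have h2 : (B.coeff (-α) α : ℝ) = -1 := by
          rw [B.coeff_neg hαΦ (neg_mem hΦ hαΦ) hα, B.coeff_self hα]
        rw [hh, h2] at hcη; norm_num at hcη
      have hη1 : ⟪ε + β, α⟫_ℝ = -1 := by
        rcases pairing_cases hΦ hηΦ hαΦ hηa hηna with h' | h' | h' <;> linarith
      have hζΦ : ε + β + α ∈ Φ := by
        have h' := hΦ.reflect_mem α hαΦ (ε + β) hηΦ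
        rw [hη1] at h'
        have e : ε + β - (-1:ℝ) • α = ε + β + α := by rw [neg_one_smul]; abel
        rwa [e] at h'
      have hcζ : (B.coeff (ε + β + α) α : ℝ) = 2 := by
        rw [B.coeff_add hηΦ hαΦ hζΦ hα, hcη, B.coeff_self hα]; norm_num
      have hcζ' : B.coeff (ε + β + α) α = 2 := by exact_mod_cast hcζ
      have hθΦ : θ ∈ Φ := hθ.1
      have hζθ : ε + β + α = θ := by
        by_contra hc
        have hζnθ : ε + β + α ≠ -θ := by
          intro hh
          have h2 : (B.coeff (-θ) α : ℝ) = -(B.coeff θ α : ℝ) :=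
            B.coeff_neg hθΦ (hh ▸ hζΦ) hα
          rw [hh, h2, hH.1] at hcζ; norm_num at hcζ
        rcases hH.2 _ hζΦ hc hζnθ with h' | h' | h' <;> omega
      exact hne (by rw [← hζθ]; abel)
    · exact Or.inl h
    · exact Or.inr h
  refine ⟨key, ?_⟩
  rcases key with h | h
  · left; rw [h, hcε]; norm_num
  · right; rw [h, hcε]; norm_num


end PaperRS
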